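/- For every real number τ > 0, there exists a finite simple graph G (with at least one vertex) such that the set S_τ = {v ∈ V(G) : SV(v) > τ} is not a dominating set of G. More precisely, there exists such a G containing a vertex a with deg(a) ≥ 1 such that SV(a) < τ and SV(b) < τ for every b ∈ N(a). -/

import Mathlib

/-- The degree of a vertex in a finite simple graph. -/
noncomputable def deg {V : Type*} [Fintype V] (G : SimpleGraph V) (v : V) : ℕ := by
  classical exact G.degree v

/-- The Shapley value of a vertex: the sum of reciprocals of its neighbors' degrees. -/
noncomputable def SV {V : Type*} [Fintype V] (G : SimpleGraph V) (v : V) : ℝ := by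
  classical exact ∑ u ∈ G.neighborFinset v, (1 : ℝ) / (G.degree u)

/-- The relative neighbor-degree of a vertex: deg(v)^2 divided by the sum of neighbors' degrees. -/
noncomputable def RND {V : Type*} [Fintype V] (G : SimpleGraph V) (v : V) : ℝ := by
  classical exact (G.degree v : ℝ) ^ 2 / ∑ u ∈ G.neighborFinset v, (G.degree u : ℝ)

open Finset

lemma card_filter_Ico (n a b : ℕ) (hb : b ≤ n) :
    (Finset.univ.filter fun v : Fin n => a ≤ v.val ∧ v.val < b).card = b - a := by
  rw [← Nat.card_Ico a b]
  apply Finset.card_bij (fun v _ => v.val)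
  · intro v hv
    simp only [mem_filter] at hv
    simp [Finset.mem_Ico, hv.2.1, hv.2.2]
  · intro u hu v hv h
    exact Fin.val_injective h
  · intro x hx
    simp only [Finset.mem_Ico] at hx
    exact ⟨⟨x, lt_of_lt_of_le hx.2 hb⟩, by simp [hx.1, hx.2], rfl⟩

def myLayer (k i : ℕ) : ℕ :=
  if i < 1 then 0 else if i < 1 + k then 1 else if i < 1 + k + k^2 then 2 else 3

def myD (k : ℕ) : ℕ → ℕ
  | 0 => k
  | 1 => 1 + k^2
  | 2 => k + k^3
  | _ => k^2

def myGraph (k : ℕ) : SimpleGraph (Fin (1 + k + k^2 + k^3)) where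
  Adj u v := myLayer k u.val + 1 = myLayer k v.val ∨ myLayer k v.val + 1 = myLayer k u.val
  symm := ⟨by intro u v h; tauto⟩
  loopless := ⟨by intro v h; omega⟩

instance (k : ℕ) : DecidableRel (myGraph k).Adj := fun _ _ => instDecidableOr

section
variable (k : ℕ)

lemma layer_le (v : Fin (1+k+k^2+k^3)) : myLayer k v.val ≤ 3 := by
  unfold myLayer; split_ifs <;> omega

lemma card_layer0 :
    (Finset.univ.filter fun v : Fin (1+k+k^2+k^3) => myLayer k v.val = 0).card = 1 := by
  have : (Finset.univ.filter fun v : Fin (1+k+k^2+k^3) => myLayer k v.val = 0)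
      = Finset.univ.filter fun v : Fin (1+k+k^2+k^3) => 0 ≤ v.val ∧ v.val < 1 := by
    apply Finset.filter_congr; intro v _; unfold myLayer; split_ifs <;> simp only [Nat.zero_le, true_and, true_iff, false_iff, not_lt] <;> omega
  rw [this, card_filter_Ico _ 0 1 (by nlinarith [sq_nonneg k])]

lemma card_layer1 :
    (Finset.univ.filter fun v : Fin (1+k+k^2+k^3) => myLayer k v.val = 1).card = k := by
  have : (Finset.univ.filter fun v : Fin (1+k+k^2+k^3) => myLayer k v.val = 1)
      = Finset.univ.filter fun v : Fin (1+k+k^2+k^3) => 1 ≤ v.val ∧ v.val < 1 + k := by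
    apply Finset.filter_congr; intro v _; unfold myLayer; split_ifs <;> simp <;> omega
  rw [this, card_filter_Ico _ 1 (1+k) (by nlinarith [sq_nonneg k])]
  omega

lemma card_layer2 :
    (Finset.univ.filter fun v : Fin (1+k+k^2+k^3) => myLayer k v.val = 2).card = k^2 := by
  have : (Finset.univ.filter fun v : Fin (1+k+k^2+k^3) => myLayer k v.val = 2)
      = Finset.univ.filter fun v : Fin (1+k+k^2+k^3) => 1+k ≤ v.val ∧ v.val < 1 + k + k^2 := by
    apply Finset.filter_congr; intro v _; unfold myLayer; split_ifs <;> simp <;> omega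
  rw [this, card_filter_Ico _ (1+k) (1+k+k^2) (by nlinarith [sq_nonneg k])]
  omega

lemma card_layer3 :
    (Finset.univ.filter fun v : Fin (1+k+k^2+k^3) => myLayer k v.val = 3).card = k^3 := by
  have : (Finset.univ.filter fun v : Fin (1+k+k^2+k^3) => myLayer k v.val = 3)
      = Finset.univ.filter fun v : Fin (1+k+k^2+k^3) =>
          1+k+k^2 ≤ v.val ∧ v.val < 1 + k + k^2 + k^3 := by
    apply Finset.filter_congr; intro v _
    have := v.isLt
    unfold myLayer; split_ifs <;> simp <;> omega
  rw [this, card_filter_Ico _ (1+k+k^2) (1+k+k^2+k^3) le_rfl]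
  omega

lemma myNbr (v : Fin (1+k+k^2+k^3)) [Fintype ((myGraph k).neighborSet v)]
    [DecidablePred (fun u => (myGraph k).Adj v u)] :
    (myGraph k).neighborFinset v =
      Finset.univ.filter (fun u => (myGraph k).Adj v u) := by
  ext u; simp [SimpleGraph.mem_neighborFinset]

lemma degree_eq (v : Fin (1+k+k^2+k^3)) [Fintype ((myGraph k).neighborSet v)] :
    (myGraph k).degree v = myD k (myLayer k v.val) := by
  classical
  rw [SimpleGraph.degree, myNbr]
  have hv := layer_le k v
  interval_cases h : myLayer k v.val
  · have : (Finset.univ.filter fun u => (myGraph k).Adj v u)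
        = Finset.univ.filter fun u : Fin (1+k+k^2+k^3) => myLayer k u.val = 1 := by
      apply Finset.filter_congr; intro u _
      show (myLayer k v.val + 1 = myLayer k u.val ∨ _) ↔ _
      rw [h]; simp; omega
    rw [this, card_layer1]; rfl
  · have : (Finset.univ.filter fun u => (myGraph k).Adj v u)
        = (Finset.univ.filter fun u : Fin (1+k+k^2+k^3) => myLayer k u.val = 0) ∪
          (Finset.univ.filter fun u : Fin (1+k+k^2+k^3) => myLayer k u.val = 2) := by
      rw [← Finset.filter_or]
      apply Finset.filter_congr; intro u _
      show (myLayer k v.val + 1 = myLayer k u.val ∨ _) ↔ _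
      rw [h]; omega
    rw [this, Finset.card_union_of_disjoint, card_layer0, card_layer2]
    · rfl
    · rw [Finset.disjoint_filter]; intro u _ h0 h2; omega
  · have : (Finset.univ.filter fun u => (myGraph k).Adj v u)
        = (Finset.univ.filter fun u : Fin (1+k+k^2+k^3) => myLayer k u.val = 1) ∪
          (Finset.univ.filter fun u : Fin (1+k+k^2+k^3) => myLayer k u.val = 3) := by
      rw [← Finset.filter_or]
      apply Finset.filter_congr; intro u _
      show (myLayer k v.val + 1 = myLayer k u.val ∨ _) ↔ _
      have := layer_le k u
      rw [h]; omega
    rw [this, Finset.card_union_of_disjoint, card_layer1, card_layer3]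
    · rfl
    · rw [Finset.disjoint_filter]; intro u _ h0 h2; omega
  · have : (Finset.univ.filter fun u => (myGraph k).Adj v u)
        = Finset.univ.filter fun u : Fin (1+k+k^2+k^3) => myLayer k u.val = 2 := by
      apply Finset.filter_congr; intro u _
      show (myLayer k v.val + 1 = myLayer k u.val ∨ _) ↔ _
      have := layer_le k u
      rw [h]; omega
    rw [this, card_layer2]; rfl

lemma SV_eq (v : Fin (1+k+k^2+k^3)) :
    SV (myGraph k) v = ∑ u ∈ (Finset.univ.filter (fun u => (myGraph k).Adj v u) :
        Finset (Fin (1+k+k^2+k^3))), (1:ℝ) / (myD k (myLayer k u.val)) := by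
  classical
  unfold SV
  refine Finset.sum_congr ?_ ?_
  · ext u; simp [SimpleGraph.mem_neighborFinset]
  · intro u _; rw [degree_eq]
end

section
variable (k : ℕ)

lemma SV_layer0 (v : Fin (1+k+k^2+k^3)) (h : myLayer k v.val = 0) :
    SV (myGraph k) v = k * (1 / (1 + (k:ℝ)^2)) := by
  rw [SV_eq]
  have hset : (Finset.univ.filter fun u => (myGraph k).Adj v u)
      = Finset.univ.filter fun u : Fin (1+k+k^2+k^3) => myLayer k u.val = 1 := by
    apply Finset.filter_congr; intro u _
    show (myLayer k v.val + 1 = myLayer k u.val ∨ _) ↔ _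
    rw [h]; simp; omega
  rw [hset]
  have h1 : ∀ u ∈ (Finset.univ.filter fun u : Fin (1+k+k^2+k^3) => myLayer k u.val = 1),
      (1:ℝ)/(myD k (myLayer k u.val)) = 1/(1+(k:ℝ)^2) := by
    intro u hu
    rw [(Finset.mem_filter.mp hu).2]
    show (1:ℝ)/((1+k^2 : ℕ):ℝ) = _
    push_cast; ring
  rw [Finset.sum_congr rfl h1, Finset.sum_const, card_layer1, nsmul_eq_mul]

lemma SV_layer1 (v : Fin (1+k+k^2+k^3)) (h : myLayer k v.val = 1) :
    SV (myGraph k) v = 1/(k:ℝ) + k^2 * (1/((k:ℝ)+(k:ℝ)^3)) := by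
  rw [SV_eq]
  have hset : (Finset.univ.filter fun u => (myGraph k).Adj v u)
      = (Finset.univ.filter fun u : Fin (1+k+k^2+k^3) => myLayer k u.val = 0) ∪
        (Finset.univ.filter fun u : Fin (1+k+k^2+k^3) => myLayer k u.val = 2) := by
    rw [← Finset.filter_or]
    apply Finset.filter_congr; intro u _
    show (myLayer k v.val + 1 = myLayer k u.val ∨ _) ↔ _
    rw [h]; omega
  have hdisj : Disjoint
      (Finset.univ.filter fun u : Fin (1+k+k^2+k^3) => myLayer k u.val = 0)
      (Finset.univ.filter fun u : Fin (1+k+k^2+k^3) => myLayer k u.val = 2) := by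
    rw [Finset.disjoint_filter]; intro u _ h0 h2; omega
  rw [hset, Finset.sum_union hdisj]
  have h0 : ∀ u ∈ (Finset.univ.filter fun u : Fin (1+k+k^2+k^3) => myLayer k u.val = 0),
      (1:ℝ)/(myD k (myLayer k u.val)) = 1/(k:ℝ) := by
    intro u hu; rw [(Finset.mem_filter.mp hu).2]; rfl
  have h2 : ∀ u ∈ (Finset.univ.filter fun u : Fin (1+k+k^2+k^3) => myLayer k u.val = 2),
      (1:ℝ)/(myD k (myLayer k u.val)) = 1/((k:ℝ)+(k:ℝ)^3) := by
    intro u hu; rw [(Finset.mem_filter.mp hu).2]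
    show (1:ℝ)/((k+k^3 : ℕ):ℝ) = _
    push_cast; ring
  rw [Finset.sum_congr rfl h0, Finset.sum_congr rfl h2, Finset.sum_const, Finset.sum_const,
    card_layer0, card_layer2, nsmul_eq_mul, nsmul_eq_mul]
  push_cast; ring

end

lemma deg_eq_degree {V : Type*} [Fintype V] (G : SimpleGraph V) (v : V)
    [Fintype (G.neighborSet v)] : deg G v = G.degree v := by
  unfold deg
  congr!

theorem no_universal_sv_threshold (τ : ℝ) (hτ : 0 < τ) :
    ∃ (n : ℕ) (G : SimpleGraph (Fin n)) (a : Fin n),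
      1 ≤ deg G a ∧ SV G a < τ ∧ (∀ b : Fin n, G.Adj a b → SV G b < τ) ∧
      ¬ (∀ v : Fin n, SV G v > τ ∨ ∃ u : Fin n, SV G u > τ ∧ G.Adj v u) := by
  obtain ⟨k, hk⟩ := exists_nat_gt (2/τ)
  have hk0 : 0 < (k:ℝ) := lt_trans (by positivity) hk
  have hkn : 0 < k := by exact_mod_cast hk0
  have htk : 2 / (k:ℝ) < τ := by
    rw [div_lt_iff₀ hk0]
    rw [div_lt_iff₀ hτ] at hk
    linarith
  set a : Fin (1 + k + k^2 + k^3) := ⟨0, by positivity⟩ with ha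
  have ha0 : myLayer k a.val = 0 := by unfold myLayer; simp [ha]
  have hSVa : SV (myGraph k) a < τ := by
    rw [SV_layer0 k _ ha0]
    have h1 : (k:ℝ) * (1 / (1 + (k:ℝ)^2)) ≤ 1/(k:ℝ) := by
      rw [mul_one_div, div_le_div_iff₀ (by positivity) hk0]
      nlinarith
    calc (k:ℝ) * (1 / (1 + (k:ℝ)^2)) ≤ 1/(k:ℝ) := h1
      _ < 2/(k:ℝ) := by rw [div_lt_div_iff₀ hk0 hk0]; nlinarith
      _ < τ := htk
  have hSVb : ∀ b, (myGraph k).Adj a b → SV (myGraph k) b < τ := by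
    intro b hb
    have hb1 : myLayer k b.val = 1 := by
      rcases hb with h | h <;> simp only [ha0] at h <;> omega
    rw [SV_layer1 k b hb1]
    have h2 : (k:ℝ)^2 * (1/((k:ℝ)+(k:ℝ)^3)) ≤ 1/(k:ℝ) := by
      rw [mul_one_div, div_le_div_iff₀ (by positivity) hk0]
      nlinarith
    have : 1/(k:ℝ) + (k:ℝ)^2 * (1/((k:ℝ)+(k:ℝ)^3)) ≤ 2/(k:ℝ) := by
      rw [show (2:ℝ)/(k:ℝ) = 1/(k:ℝ) + 1/(k:ℝ) by ring]
      linarith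
    linarith
  refine ⟨1 + k + k^2 + k^3, myGraph k, a, ?_, hSVa, hSVb, ?_⟩
  · rw [deg_eq_degree, degree_eq]
    simp only [ha0]
    exact hkn
  · intro hcon
    rcases hcon a with h | ⟨u, hu, hadj⟩
    · linarith
    · exact absurd hu (not_lt.mpr (hSVb u hadj).le)
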